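/- Let K be a field of characteristic different from 2, let a, t ∈ K with t ≠ 0 and (a+1)·(t²+1)·((a−1)t²+(a+1)) ≠ 0, and let b ∈ K with b² = 2(a+1)(t²+1). Then (1, b/t) is an affine point of the elliptic curve E_{a,t} : y² = x³ + 2((a+1)/t² + a)·x² + x, and in the group of K-points of E_{a,t} (with identity the point at infinity) one has (1, b/t) + (1, b/t) = (0, 0); in particular the point (1, b/t) has order 4. -/

import Mathlib

open WeierstrassCurve.Affine

private lemma some_eq_some_aux {K : Type*} [Field K] {W : WeierstrassCurve.Affine K}
    {x₁ y₁ x₂ y₂ : K} (hx : x₁ = x₂) (hy : y₁ = y₂) (h₁ : W.Nonsingular x₁ y₁)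
    (h₂ : W.Nonsingular x₂ y₂) : Point.some _ _ h₁ = Point.some _ _ h₂ := by
  subst hx; subst hy; rfl

open Classical in
/-- Over a field `K` of characteristic different from 2, on a smooth fiber
`E_{a,t} : y² = x³ + 2((a+1)/t² + a)x² + x` of the van Geemen–Top elliptic surface, if
`b² = 2(a+1)(t²+1)`, then `(1, b/t)` is an affine point, doubling it gives `(0, 0)`, and
it has order `4` in the group of `K`-points. -/
theorem vanGeemenTop_four_torsion {K : Type*} [Field K] (h2 : (2 : K) ≠ 0) (a t b : K)
    (ht : t ≠ 0) (hΔ : (a + 1) * (t ^ 2 + 1) * ((a - 1) * t ^ 2 + (a + 1)) ≠ 0)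
    (hb : b ^ 2 = 2 * (a + 1) * (t ^ 2 + 1)) :
    ∃ (W : WeierstrassCurve.Affine K)
      (_ : W = { a₁ := 0, a₂ := 2 * ((a + 1) / t ^ 2 + a), a₃ := 0, a₄ := 1, a₆ := 0 })
      (h₁ : W.Nonsingular 1 (b / t)) (h₀ : W.Nonsingular 0 0),
      WeierstrassCurve.Affine.Point.some _ _ h₁ + WeierstrassCurve.Affine.Point.some _ _ h₁ =
        WeierstrassCurve.Affine.Point.some _ _ h₀ ∧
      addOrderOf (WeierstrassCurve.Affine.Point.some _ _ h₁) = 4 := by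
  set W : WeierstrassCurve.Affine K :=
    { a₁ := 0, a₂ := 2 * ((a + 1) / t ^ 2 + a), a₃ := 0, a₄ := 1, a₆ := 0 } with hW
  have ha1 : (a + 1) ≠ 0 := fun h => hΔ (by rw [h]; ring)
  have ht1 : (t ^ 2 + 1) ≠ 0 := fun h => hΔ (by rw [h]; ring)
  have hbne : b ≠ 0 := by
    intro h
    rw [h] at hb
    exact (mul_ne_zero (mul_ne_zero h2 ha1) ht1) (by linear_combination -hb)
  have h₁ : W.Nonsingular 1 (b / t) := by
    rw [nonsingular_iff']
    constructor
    · rw [equation_iff]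
      simp only [hW]
      field_simp
      linear_combination hb
    · left
      simp only [hW]
      intro h
      apply mul_ne_zero (mul_ne_zero (mul_ne_zero h2 h2) ha1) ht1
      have ht2 : t ^ 2 ≠ 0 := pow_ne_zero 2 ht
      field_simp at h
      linear_combination -h
  have h₀ : W.Nonsingular 0 0 := by
    rw [nonsingular_iff']
    refine ⟨by rw [equation_iff]; simp [hW], Or.inl ?_⟩
    simp [hW]
  refine ⟨W, hW, h₁, h₀, ?_⟩
  have hyne : b / t ≠ W.negY 1 (b / t) := by
    simp only [negY, hW]
    intro h
    apply mul_ne_zero h2 (div_ne_zero hbne ht)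
    linear_combination h
  have hadd : Point.some _ _ h₁ + Point.some _ _ h₁ = Point.some _ _ h₀ := by
    rw [Point.add_self_of_Y_ne hyne]
    have hslope : W.slope 1 1 (b / t) (b / t) = b / t := by
      rw [slope_of_Y_ne rfl hyne]
      simp only [negY, hW]
      rw [div_eq_div_iff]
      · field_simp
        ring_nf
        linear_combination (-2) * hb
      · field_simp
        intro h
        exact hbne ((mul_eq_zero.mp (show (2:K)*b = 0 by rw [div_eq_zero_iff] at h; linear_combination h.resolve_right ht)).resolve_left h2)
      · exact ht
    apply some_eq_some_aux
    · rw [addX, hslope]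
      simp only [hW]
      field_simp
      linear_combination hb
    · rw [addY, negAddY, addX, hslope]
      simp only [negY, hW]
      field_simp
      linear_combination (-b) * hb
  refine ⟨hadd, ?_⟩
  have h2tor : Point.some _ _ h₀ + Point.some _ _ h₀ = 0 := by
    apply Point.add_self_of_Y_eq
    simp [negY, hW]
  have hQne : Point.some _ _ h₀ ≠ 0 := by
    intro h
    cases h
  have h2P : (2 : ℕ) • Point.some _ _ h₁ = Point.some _ _ h₀ := by
    rw [two_nsmul, hadd]
  have h4P : (4 : ℕ) • Point.some _ _ h₁ = 0 := by
    rw [show (4 : ℕ) = 2 * 2 from rfl, mul_smul, h2P, two_nsmul, h2tor]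
  have hdvd : addOrderOf (Point.some _ _ h₁) ∣ 4 := addOrderOf_dvd_of_nsmul_eq_zero h4P
  have hndvd : ¬ addOrderOf (Point.some _ _ h₁) ∣ 2 := by
    intro h
    exact hQne (h2P ▸ (addOrderOf_dvd_iff_nsmul_eq_zero.mp h))
  have hle : addOrderOf (Point.some _ _ h₁) ≤ 4 := Nat.le_of_dvd (by norm_num) hdvd
  have hpos : 0 < addOrderOf (Point.some _ _ h₁) := Nat.pos_of_dvd_of_pos hdvd (by norm_num)
  interval_cases h : addOrderOf (Point.some _ _ h₁)
  all_goals first | rfl | (exfalso; revert hdvd hndvd; decide)
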